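/- arXiv:2601.14173 — 5 statements merged into one kernel-verified Lean document; each statement's English description precedes it below -/
import Mathlib

section
/- (Theorem 3.1, division-free form.) Let g : [0,1]^N → ℝ^M be a low-rank tensor-product model g(x) = Σ_{r=1}^R v_r ∏_{n=1}^N g_{n,r}(x_n), where each g_{n,r} : [0,1] → ℝ is continuously differentiable. Then the Dirichlet energy admits the closed form DE(g) = ∫_{[0,1]^N} ‖∇g(x)‖_F² dx = Σ_{r=1}^R Σ_{k=1}^R ⟨v_r, v_k⟩_{ℝ^M} Σ_{q=1}^N ⟨g'_{q,r}, g'_{q,k}⟩ ∏_{n≠q} ⟨g_{n,r}, g_{n,k}⟩, where ⟨f, h⟩ := ∫_0^1 f(x) h(x) dx. -/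
open MeasureTheory

private lemma cube_prod_integral {N : ℕ} (f : Fin N → ℝ → ℝ) :
    (∫ x in Set.univ.pi fun _ : Fin N => Set.Icc (0:ℝ) 1, ∏ n, f n (x n)) =
      ∏ n, ∫ t in Set.Icc (0:ℝ) 1, f n t := by
  rw [← MeasureTheory.integral_indicator (MeasurableSet.univ_pi fun _ => measurableSet_Icc)]
  have h : ∀ x : Fin N → ℝ,
      (Set.univ.pi fun _ : Fin N => Set.Icc (0:ℝ) 1).indicator (fun x => ∏ n, f n (x n)) x
        = ∏ n, (Set.Icc (0:ℝ) 1).indicator (f n) (x n) := by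
    intro x
    by_cases hx : x ∈ Set.univ.pi fun _ : Fin N => Set.Icc (0:ℝ) 1
    · rw [Set.indicator_of_mem hx]
      exact Finset.prod_congr rfl fun n _ => (Set.indicator_of_mem (hx n (Set.mem_univ n)) _).symm
    · rw [Set.indicator_of_notMem hx]
      rw [Set.mem_univ_pi] at hx
      push_neg at hx
      obtain ⟨n, hn⟩ := hx
      exact (Finset.prod_eq_zero (Finset.mem_univ n) (Set.indicator_of_notMem hn _)).symm
  simp_rw [h]
  rw [MeasureTheory.volume_pi, MeasureTheory.integral_fintype_prod_eq_prod (ι := Fin N)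
    (fun n => (Set.Icc (0:ℝ) 1).indicator (f n))]
  exact Finset.prod_congr rfl fun n _ => MeasureTheory.integral_indicator measurableSet_Icc

private lemma quad_expand {N M R : ℕ} (A : Fin N → Fin R → ℝ) (w : Fin R → Fin M → ℝ) :
    ∑ i : Fin M, ∑ q : Fin N, (∑ r, A q r * w r i)^2
      = ∑ r, ∑ k, (∑ i : Fin M, w r i * w k i) * ∑ q, A q r * A q k := by
  simp_rw [pow_two, Finset.sum_mul_sum]
  refine Eq.trans (Finset.sum_congr rfl fun i _ => Finset.sum_comm) ?_
  refine Eq.trans Finset.sum_comm ?_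
  refine Finset.sum_congr rfl fun r _ => ?_
  refine Eq.trans (Finset.sum_congr rfl fun i _ => Finset.sum_comm) ?_
  refine Eq.trans Finset.sum_comm ?_
  exact Finset.sum_congr rfl fun k _ => Finset.sum_congr rfl fun i _ =>
    Finset.sum_congr rfl fun q _ => by ring

/-- Theorem 3.1 (division-free form): the Dirichlet energy of a low-rank tensor-product model
with C¹ univariate factors equals
`Σ_r Σ_k ⟨v_r, v_k⟩ Σ_q ⟨g'_{q,r}, g'_{q,k}⟩ ∏_{n≠q} ⟨g_{n,r}, g_{n,k}⟩`. -/
theorem tpbs_dirichlet_energy_closed_form (N M R : ℕ)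
    (v : Fin R → EuclideanSpace ℝ (Fin M))
    (g : Fin N → Fin R → ℝ → ℝ)
    (hg : ∀ n r, ContDiff ℝ 1 (g n r))
    (G : (Fin N → ℝ) → EuclideanSpace ℝ (Fin M))
    (hG : ∀ x, G x = ∑ r, (∏ n, g n r (x n)) • v r) :
    (∫ x in Set.univ.pi fun _ : Fin N => Set.Icc (0:ℝ) 1,
        ∑ i : Fin M, ∑ q : Fin N, (fderiv ℝ G x (Pi.single q 1) i) ^ 2) =
      ∑ r, ∑ k, (inner ℝ (v r) (v k) : ℝ) *
        ∑ q, (∫ t in (0:ℝ)..1, deriv (g q r) t * deriv (g q k) t) *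
          ∏ n ∈ Finset.univ.erase q, ∫ t in (0:ℝ)..1, g n r t * g n k t := by
  classical
  set cube : Set (Fin N → ℝ) := Set.univ.pi fun _ : Fin N => Set.Icc (0:ℝ) 1 with hcube
  set D : Fin N → Fin R → (Fin N → ℝ) → ℝ :=
    fun q r x => deriv (g q r) (x q) * ∏ n ∈ Finset.univ.erase q, g n r (x n) with hD
  -- Step 1: derivative formula
  have key : ∀ (x : Fin N → ℝ) (q : Fin N),
      fderiv ℝ G x (Pi.single q 1) = ∑ r, D q r x • v r := by
    intro x q
    have hcoord : ∀ (n : Fin N) (r : Fin R), HasFDerivAt (fun y : Fin N → ℝ => g n r (y n))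
        ((deriv (g n r) (x n)) • (ContinuousLinearMap.proj n : (Fin N → ℝ) →L[ℝ] ℝ)) x :=
      fun n r => (((hg n r).differentiable one_ne_zero (x n)).hasDerivAt).comp_hasFDerivAt x
        (hasFDerivAt_apply n x)
    have hd : HasFDerivAt G (∑ r, (∑ n, (∏ j ∈ Finset.univ.erase n, g j r (x j)) •
          ((deriv (g n r) (x n)) • (ContinuousLinearMap.proj n : (Fin N → ℝ) →L[ℝ] ℝ))).smulRight
          (v r)) x := by
      rw [funext hG]
      exact HasFDerivAt.fun_sum fun r _ =>
        (HasFDerivAt.finset_prod fun n _ => hcoord n r).smul_const (v r)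
    rw [hd.fderiv, ContinuousLinearMap.sum_apply]
    refine Finset.sum_congr rfl fun r _ => ?_
    rw [ContinuousLinearMap.smulRight_apply, ContinuousLinearMap.sum_apply]
    congr 1
    rw [Finset.sum_eq_single q]
    · simp [hD, mul_comm]
    · intro n _ hn
      simp [Pi.single_apply, hn.symm]
    · simp
  -- Step 2: pointwise integrand identity
  have hpt : ∀ x : Fin N → ℝ,
      (∑ i : Fin M, ∑ q : Fin N, (fderiv ℝ G x (Pi.single q 1) i) ^ 2)
        = ∑ r, ∑ k, (inner ℝ (v r) (v k) : ℝ) * ∑ q, D q r x * D q k x := by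
    intro x
    have happ : ∀ (q : Fin N) (i : Fin M),
        fderiv ℝ G x (Pi.single q 1) i = ∑ r, D q r x * (v r) i := by
      intro q i
      rw [key x q]
      induction (Finset.univ : Finset (Fin R)) using Finset.cons_induction with
      | empty => simp
      | cons a s ha ih =>
          rw [Finset.sum_cons, Finset.sum_cons, ← ih]
          rfl
    simp_rw [happ]
    rw [quad_expand (fun q r => D q r x) (fun r i => (v r) i)]
    refine Finset.sum_congr rfl fun r _ => Finset.sum_congr rfl fun k _ => ?_
    congr 1
    simp [PiLp.inner_apply, Real.inner_apply, mul_comm]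
  rw [MeasureTheory.integral_congr_ae (Filter.Eventually.of_forall hpt)]
  -- Step 3: integrability
  have hDcont : ∀ (q : Fin N) (r : Fin R), Continuous (D q r) := fun q r =>
    (((hg q r).continuous_deriv le_rfl).comp (continuous_apply q)).mul
      (continuous_finset_prod _ fun n _ => ((hg n r).continuous).comp (continuous_apply n))
  have hcompact : IsCompact cube := isCompact_univ_pi fun _ => isCompact_Icc
  have hDint : ∀ (q : Fin N) (r k : Fin R),
      IntegrableOn (fun x => D q r x * D q k x) cube volume := fun q r k =>
    (((hDcont q r).mul (hDcont q k)).continuousOn).integrableOn_compact hcompact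
  rw [MeasureTheory.integral_finset_sum _ (fun r _ =>
    integrable_finset_sum _ (fun k _ =>
      (integrable_finset_sum _ (fun q _ => hDint q r k)).const_mul _))]
  refine Finset.sum_congr rfl fun r _ => ?_
  rw [MeasureTheory.integral_finset_sum _ (fun k _ =>
      (integrable_finset_sum _ (fun q _ => hDint q r k)).const_mul _)]
  refine Finset.sum_congr rfl fun k _ => ?_
  rw [MeasureTheory.integral_const_mul]
  congr 1
  rw [MeasureTheory.integral_finset_sum _ (fun q _ => hDint q r k)]
  refine Finset.sum_congr rfl fun q _ => ?_
  -- Step 4: Fubini for each product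
  set F : Fin N → ℝ → ℝ := fun n => if n = q
    then fun t => deriv (g q r) t * deriv (g q k) t
    else fun t => g n r t * g n k t with hF
  have hprodform : ∀ x : Fin N → ℝ, D q r x * D q k x = ∏ n, F n (x n) := by
    intro x
    rw [← Finset.mul_prod_erase Finset.univ (fun n => F n (x n)) (Finset.mem_univ q)]
    have h1 : F q (x q) = deriv (g q r) (x q) * deriv (g q k) (x q) := by simp [hF]
    have h2 : ∏ n ∈ Finset.univ.erase q, F n (x n)
        = ∏ n ∈ Finset.univ.erase q, (g n r (x n) * g n k (x n)) :=
      Finset.prod_congr rfl fun n hn => by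
        simp [hF, Finset.ne_of_mem_erase hn]
    rw [h1, h2, Finset.prod_mul_distrib]
    simp only [hD]
    ring
  have hIcc : ∀ h : ℝ → ℝ, (∫ t in (0:ℝ)..1, h t) = ∫ t in Set.Icc (0:ℝ) 1, h t := fun h => by
    rw [intervalIntegral.integral_of_le zero_le_one, MeasureTheory.integral_Icc_eq_integral_Ioc]
  calc (∫ x in cube, D q r x * D q k x) = ∫ x in cube, ∏ n, F n (x n) :=
        MeasureTheory.integral_congr_ae (Filter.Eventually.of_forall hprodform)
    _ = ∏ n, ∫ t in Set.Icc (0:ℝ) 1, F n t := cube_prod_integral F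
    _ = (∫ t in Set.Icc (0:ℝ) 1, F q t) * ∏ n ∈ Finset.univ.erase q, ∫ t in Set.Icc (0:ℝ) 1, F n t :=
        (Finset.mul_prod_erase Finset.univ _ (Finset.mem_univ q)).symm
    _ = _ := by
        rw [hIcc]
        congr 1
        · congr 1
          simp [hF]
        · refine Finset.prod_congr rfl fun n hn => ?_
          rw [hIcc]
          congr 1
          simp [hF, Finset.ne_of_mem_erase hn]
end

section
/- (Theorem 3.1.) Let g : [0,1]^N → ℝ^M be a low-rank tensor-product model g(x) = Σ_{r=1}^R v_r ∏_{n=1}^N g_{n,r}(x_n), where each g_{n,r} : [0,1] → ℝ is continuously differentiable, each v_r ≠ 0, each g_{n,r} has nonzero L² norm, and ⟨g_{n,r}, g_{n,k}⟩ ≠ 0 for all n, r, k. Define s_r := ‖v_r‖ ∏_{n=1}^N ‖g_{n,r}‖, A⁰_{r,k} := (⟨v_r, v_k⟩/(‖v_r‖‖v_k‖)) ∏_{n=1}^N ⟨g_{n,r}, g_{n,k}⟩/(‖g_{n,r}‖‖g_{n,k}‖), A¹_{r,k} := Σ_{n=1}^N ⟨g'_{n,r}, g'_{n,k}⟩/⟨g_{n,r},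 g_{n,k}⟩, and Z_{r,k} := A⁰_{r,k} A¹_{r,k}. Then the Dirichlet energy satisfies DE(g) = ∫_{[0,1]^N} ‖∇g(x)‖_F² dx = Σ_{r=1}^R Σ_{k=1}^R s_r Z_{r,k} s_k. -/
open MeasureTheory

section TpbsAux

open Finset

lemma tpbs_ii_eq (f : ℝ → ℝ) : (∫ t in (0:ℝ)..1, f t) = ∫ t in Set.Icc (0:ℝ) 1, f t := by
  rw [intervalIntegral.integral_of_le zero_le_one, integral_Icc_eq_integral_Ioc]

lemma tpbs_pi_restrict_box (N : ℕ) :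
    (volume : Measure (Fin N → ℝ)).restrict (Set.univ.pi fun _ => Set.Icc (0:ℝ) 1)
      = Measure.pi fun _ : Fin N => (volume : Measure ℝ).restrict (Set.Icc 0 1) := by
  refine (Measure.pi_eq
    (μ' := (volume : Measure (Fin N → ℝ)).restrict (Set.univ.pi fun _ => Set.Icc (0:ℝ) 1))
    (μ := fun _ : Fin N => (volume : Measure ℝ).restrict (Set.Icc 0 1))
    fun t ht => ?_).symm
  rw [Measure.restrict_apply (MeasurableSet.univ_pi ht)]
  rw [← Set.pi_inter_distrib, volume_pi_pi]
  simp [Measure.restrict_apply (ht _)]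

lemma tpbs_fubini_box (N : ℕ) (f : Fin N → ℝ → ℝ) :
    (∫ x in Set.univ.pi fun _ : Fin N => Set.Icc (0:ℝ) 1, ∏ n, f n (x n))
      = ∏ n, ∫ t in Set.Icc (0:ℝ) 1, f n t := by
  rw [tpbs_pi_restrict_box]
  exact integral_fintype_prod_eq_prod (E := fun _ => ℝ) f
    (μ := fun _ => (volume : Measure ℝ).restrict (Set.Icc 0 1))

lemma tpbs_fderiv_G {N M R : ℕ} (v : Fin R → EuclideanSpace ℝ (Fin M))
    (g : Fin N → Fin R → ℝ → ℝ)
    (hg : ∀ n r, ContDiff ℝ 1 (g n r))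
    (G : (Fin N → ℝ) → EuclideanSpace ℝ (Fin M))
    (hG : ∀ x, G x = ∑ r, (∏ n, g n r (x n)) • v r)
    (x : Fin N → ℝ) (q : Fin N) :
    fderiv ℝ G x (Pi.single q 1)
      = ∑ r, ((∏ j ∈ Finset.univ.erase q, g j r (x j)) * deriv (g q r) (x q)) • v r := by
  have hP : ∀ r, HasFDerivAt (fun y : Fin N → ℝ => ∏ n, g n r (y n))
      (∑ n, (∏ j ∈ Finset.univ.erase n, g j r (x j)) •
        (deriv (g n r) (x n) • ContinuousLinearMap.proj (R := ℝ) (φ := fun _ : Fin N => ℝ) n)) x := by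
    intro r
    refine HasFDerivAt.finset_prod fun n _ => ?_
    have h1 : HasDerivAt (g n r) (deriv (g n r) (x n)) (x n) :=
      (((hg n r).differentiable one_ne_zero) (x n)).hasDerivAt
    have h2 : HasFDerivAt (fun y : Fin N → ℝ => y n)
        (ContinuousLinearMap.proj (R := ℝ) (φ := fun _ : Fin N => ℝ) n) x :=
      (ContinuousLinearMap.proj (R := ℝ) (φ := fun _ : Fin N => ℝ) n).hasFDerivAt
    exact h1.comp_hasFDerivAt x h2
  have hsum : HasFDerivAt G
      (∑ r, (ContinuousLinearMap.smulRight
        (∑ n, (∏ j ∈ Finset.univ.erase n, g j r (x j)) •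
          (deriv (g n r) (x n) • ContinuousLinearMap.proj (R := ℝ) (φ := fun _ : Fin N => ℝ) n))
        (v r))) x := by
    rw [funext hG]
    exact HasFDerivAt.fun_sum fun r _ => (hP r).smul_const (v r)
  rw [hsum.fderiv]
  simp only [ContinuousLinearMap.coe_sum', Finset.sum_apply,
    ContinuousLinearMap.smulRight_apply, ContinuousLinearMap.sum_apply,
    ContinuousLinearMap.smul_apply, ContinuousLinearMap.proj_apply]
  refine Finset.sum_congr rfl fun r _ => ?_
  congr 1
  rw [Finset.sum_eq_single q]
  · simp
  · intro n _ hn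
    simp [Pi.single_apply, hn]
  · simp

lemma tpbs_euclid_sum_apply {M R : ℕ} (v : Fin R → EuclideanSpace ℝ (Fin M))
    (c : Fin R → ℝ) (i : Fin M) :
    ((∑ r, c r • v r : EuclideanSpace ℝ (Fin M)) i) = ∑ r, c r * v r i := by
  have : ((∑ r, c r • v r : EuclideanSpace ℝ (Fin M)) i)
      = EuclideanSpace.proj (𝕜 := ℝ) i (∑ r, c r • v r) := rfl
  rw [this, map_sum]
  simp [smul_eq_mul]

end TpbsAux

/-- Theorem 3.1: the Dirichlet energy of a low-rank tensor-product model with C¹ univariate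
factors satisfies `DE(g) = Σ_r Σ_k s_r Z_{r,k} s_k`, where `s_r = ‖v_r‖ ∏_n ‖g_{n,r}‖`,
`Z_{r,k} = A⁰_{r,k} A¹_{r,k}`, `A⁰` is the product of cosines and `A¹` the sum of ratios of
inner products of derivatives over inner products of the factors. -/
theorem tpbs_dirichlet_energy_sZs (N M R : ℕ)
    (v : Fin R → EuclideanSpace ℝ (Fin M))
    (g : Fin N → Fin R → ℝ → ℝ)
    (hg : ∀ n r, ContDiff ℝ 1 (g n r))
    (hv : ∀ r, v r ≠ 0)
    (hnorm : ∀ n r, Real.sqrt (∫ t in (0:ℝ)..1, (g n r t) ^ 2) ≠ 0)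
    (hip : ∀ n r k, (∫ t in (0:ℝ)..1, g n r t * g n k t) ≠ 0)
    (G : (Fin N → ℝ) → EuclideanSpace ℝ (Fin M))
    (hG : ∀ x, G x = ∑ r, (∏ n, g n r (x n)) • v r)
    (s : Fin R → ℝ)
    (hs : ∀ r, s r = ‖v r‖ * ∏ n, Real.sqrt (∫ t in (0:ℝ)..1, (g n r t) ^ 2))
    (A0 A1 Z : Fin R → Fin R → ℝ)
    (hA0 : ∀ r k, A0 r k = ((inner ℝ (v r) (v k) : ℝ) / (‖v r‖ * ‖v k‖)) *
        ∏ n, (∫ t in (0:ℝ)..1, g n r t * g n k t) /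
          (Real.sqrt (∫ t in (0:ℝ)..1, (g n r t) ^ 2) *
            Real.sqrt (∫ t in (0:ℝ)..1, (g n k t) ^ 2)))
    (hA1 : ∀ r k, A1 r k = ∑ n,
        (∫ t in (0:ℝ)..1, deriv (g n r) t * deriv (g n k) t) /
          (∫ t in (0:ℝ)..1, g n r t * g n k t))
    (hZ : ∀ r k, Z r k = A0 r k * A1 r k) :
    (∫ x in Set.univ.pi fun _ : Fin N => Set.Icc (0:ℝ) 1,
        ∑ i : Fin M, ∑ q : Fin N, (fderiv ℝ G x (Pi.single q 1) i) ^ 2) =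
      ∑ r, ∑ k, s r * Z r k * s k := by
  classical
  set box := Set.univ.pi fun _ : Fin N => Set.Icc (0:ℝ) 1 with hbox
  set c : Fin N → Fin R → (Fin N → ℝ) → ℝ :=
    fun q r x => (∏ j ∈ Finset.univ.erase q, g j r (x j)) * deriv (g q r) (x q) with hc
  -- pointwise identity for the integrand
  have hpt : ∀ x, (∑ i : Fin M, ∑ q : Fin N, (fderiv ℝ G x (Pi.single q 1) i) ^ 2)
      = ∑ q, ∑ r, ∑ k, (inner ℝ (v r) (v k) : ℝ) * (c q r x * c q k x) := by
    intro x
    rw [Finset.sum_comm]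
    refine Finset.sum_congr rfl fun q _ => ?_
    rw [tpbs_fderiv_G v g hg G hG x q]
    simp only [tpbs_euclid_sum_apply]
    simp only [sq, Finset.sum_mul_sum]
    conv_lhs => rw [Finset.sum_comm]
    refine Finset.sum_congr rfl fun r _ => ?_
    rw [Finset.sum_comm]
    refine Finset.sum_congr rfl fun k _ => ?_
    rw [PiLp.inner_apply]
    simp only [RCLike.inner_apply, starRingEnd_apply, star_trivial]
    rw [Finset.sum_mul]
    exact Finset.sum_congr rfl fun i _ => by simp only [hc]; ring
  -- continuity and integrability
  have hccont : ∀ q r, Continuous (c q r) := by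
    intro q r
    show Continuous fun x : Fin N → ℝ =>
      (∏ j ∈ Finset.univ.erase q, g j r (x j)) * deriv (g q r) (x q)
    exact (continuous_finset_prod _ fun j _ =>
      (hg j r).continuous.comp (continuous_apply j)).mul
      (((hg q r).continuous_deriv le_rfl).comp (continuous_apply q))
  have hint : ∀ q r k, IntegrableOn
      (fun x => (inner ℝ (v r) (v k) : ℝ) * (c q r x * c q k x)) box volume := by
    intro q r k
    exact (continuous_const.mul ((hccont q r).mul (hccont q k))).continuousOn.integrableOn_compact
      (isCompact_univ_pi fun _ => isCompact_Icc)
  -- term-by-term integral via Fubini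
  have hterm : ∀ q r k, (∫ x in box, (inner ℝ (v r) (v k) : ℝ) * (c q r x * c q k x))
      = (inner ℝ (v r) (v k) : ℝ) *
        ((∫ t in (0:ℝ)..1, deriv (g q r) t * deriv (g q k) t) *
          ∏ n ∈ Finset.univ.erase q, ∫ t in (0:ℝ)..1, g n r t * g n k t) := by
    intro q r k
    rw [integral_const_mul]
    congr 1
    set f : Fin N → ℝ → ℝ := fun n t =>
      if n = q then deriv (g n r) t * deriv (g n k) t else g n r t * g n k t with hf
    have h1 : (∫ x in box, c q r x * c q k x) = ∏ n, ∫ t in Set.Icc (0:ℝ) 1, f n t := by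
      rw [← tpbs_fubini_box N f]
      refine integral_congr_ae (Filter.Eventually.of_forall fun x => ?_)
      show c q r x * c q k x = ∏ n, f n (x n)
      rw [← Finset.mul_prod_erase Finset.univ (fun n => f n (x n)) (Finset.mem_univ q)]
      have h2 : ∏ n ∈ Finset.univ.erase q, f n (x n)
          = ∏ n ∈ Finset.univ.erase q, g n r (x n) * g n k (x n) :=
        Finset.prod_congr rfl fun n hn => by
          simp only [hf, if_neg (Finset.ne_of_mem_erase hn)]
      rw [h2, Finset.prod_mul_distrib]
      simp only [hf, if_pos rfl, hc]
      ring
    rw [h1, ← Finset.mul_prod_erase Finset.univ _ (Finset.mem_univ q)]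
    have h3 : (∫ t in Set.Icc (0:ℝ) 1, f q t)
        = ∫ t in (0:ℝ)..1, deriv (g q r) t * deriv (g q k) t := by
      rw [tpbs_ii_eq]
      simp only [hf, if_pos rfl]
    have h4 : ∏ n ∈ Finset.univ.erase q, (∫ t in Set.Icc (0:ℝ) 1, f n t)
        = ∏ n ∈ Finset.univ.erase q, ∫ t in (0:ℝ)..1, g n r t * g n k t := by
      refine Finset.prod_congr rfl fun n hn => ?_
      rw [tpbs_ii_eq]
      simp only [hf, if_neg (Finset.ne_of_mem_erase hn)]
    rw [h3, h4]
  -- algebraic identity for the right-hand side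
  have hrhs : ∀ r k, s r * Z r k * s k
      = ∑ q, (inner ℝ (v r) (v k) : ℝ) *
          ((∫ t in (0:ℝ)..1, deriv (g q r) t * deriv (g q k) t) *
            ∏ n ∈ Finset.univ.erase q, ∫ t in (0:ℝ)..1, g n r t * g n k t) := by
    intro r k
    rw [hs r, hs k, hZ, hA0, hA1]
    simp only [Finset.mul_sum, Finset.sum_mul]
    refine Finset.sum_congr rfl fun q _ => ?_
    have hvr : ‖v r‖ ≠ 0 := norm_ne_zero_iff.mpr (hv r)
    have hvk : ‖v k‖ ≠ 0 := norm_ne_zero_iff.mpr (hv k)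
    have hbr : (∏ n, Real.sqrt (∫ t in (0:ℝ)..1, (g n r t) ^ 2)) ≠ 0 :=
      Finset.prod_ne_zero_iff.mpr fun n _ => hnorm n r
    have hbk : (∏ n, Real.sqrt (∫ t in (0:ℝ)..1, (g n k t) ^ 2)) ≠ 0 :=
      Finset.prod_ne_zero_iff.mpr fun n _ => hnorm n k
    have haq : (∫ t in (0:ℝ)..1, g q r t * g q k t) ≠ 0 := hip q r k
    have hprod : (∏ n, ((∫ t in (0:ℝ)..1, g n r t * g n k t) /
          (Real.sqrt (∫ t in (0:ℝ)..1, (g n r t) ^ 2) *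
            Real.sqrt (∫ t in (0:ℝ)..1, (g n k t) ^ 2))))
        = (∏ n, ∫ t in (0:ℝ)..1, g n r t * g n k t) /
          ((∏ n, Real.sqrt (∫ t in (0:ℝ)..1, (g n r t) ^ 2)) *
            (∏ n, Real.sqrt (∫ t in (0:ℝ)..1, (g n k t) ^ 2))) := by
      rw [Finset.prod_div_distrib, Finset.prod_mul_distrib]
    have hsplit : (∏ n, ∫ t in (0:ℝ)..1, g n r t * g n k t)
        = (∫ t in (0:ℝ)..1, g q r t * g q k t) *
          ∏ n ∈ Finset.univ.erase q, ∫ t in (0:ℝ)..1, g n r t * g n k t :=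
      (Finset.mul_prod_erase Finset.univ _ (Finset.mem_univ q)).symm
    rw [hprod, hsplit]
    field_simp
  -- assemble
  calc (∫ x in box, ∑ i : Fin M, ∑ q : Fin N, (fderiv ℝ G x (Pi.single q 1) i) ^ 2)
      = ∫ x in box, ∑ q, ∑ r, ∑ k, (inner ℝ (v r) (v k) : ℝ) * (c q r x * c q k x) := by
        refine integral_congr_ae (Filter.Eventually.of_forall fun x => hpt x)
    _ = ∑ q, ∑ r, ∑ k, ∫ x in box, (inner ℝ (v r) (v k) : ℝ) * (c q r x * c q k x) := by
        rw [integral_finset_sum _ (fun q _ => integrable_finset_sum _ fun r _ =>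
          integrable_finset_sum _ fun k _ => hint q r k)]
        refine Finset.sum_congr rfl fun q _ => ?_
        rw [integral_finset_sum _ (fun r _ => integrable_finset_sum _ fun k _ => hint q r k)]
        refine Finset.sum_congr rfl fun r _ => ?_
        exact integral_finset_sum _ fun k _ => hint q r k
    _ = ∑ r, ∑ k, ∑ q, (inner ℝ (v r) (v k) : ℝ) *
          ((∫ t in (0:ℝ)..1, deriv (g q r) t * deriv (g q k) t) *
            ∏ n ∈ Finset.univ.erase q, ∫ t in (0:ℝ)..1, g n r t * g n k t) := by
        rw [Finset.sum_comm]
        refine Finset.sum_congr rfl fun r _ => ?_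
        rw [Finset.sum_comm]
        exact Finset.sum_congr rfl fun k _ => Finset.sum_congr rfl fun q _ => hterm q r k
    _ = ∑ r, ∑ k, s r * Z r k * s k := by
        exact Finset.sum_congr rfl fun r _ => Finset.sum_congr rfl fun k _ => (hrhs r k).symm
end

section
/- Let g : [0,1]^N → ℝ^M be a low-rank tensor-product model g(x) = Σ_{r=1}^R v_r ∏_{n=1}^N g_{n,r}(x_n), where each g_{n,r} : [0,1] → ℝ is continuously differentiable. Suppose there are constants c, L, V ≥ 0 such that ‖g_{n,r}‖ ≤ c, ‖g'_{n,r}‖ ≤ L, and ‖v_r‖ ≤ V for all n, r. Then the Dirichlet energy satisfies DE(g) ≤ R² V² N L² c^{2(N−1)}. In particular, if c < 1, the Dirichlet energy is exponentially small in the dimension N. -/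
open MeasureTheory

/-- If every univariate factor of a low-rank tensor-product model has L² norm at most `c`,
every derivative has L² norm at most `L`, and every vector `v_r` has norm at most `V`, then
the Dirichlet energy is bounded by `R² V² N L² c^{2(N-1)}`; in particular it is exponentially
small in `N` when `c < 1`. -/
theorem tpbs_dirichlet_energy_exponential_bound (N M R : ℕ)
    (v : Fin R → EuclideanSpace ℝ (Fin M))
    (g : Fin N → Fin R → ℝ → ℝ)
    (hg : ∀ n r, ContDiff ℝ 1 (g n r))
    (c L V : ℝ) (hc : 0 ≤ c) (hL : 0 ≤ L) (hV : 0 ≤ V)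
    (hgc : ∀ n r, Real.sqrt (∫ t in (0:ℝ)..1, (g n r t) ^ 2) ≤ c)
    (hgL : ∀ n r, Real.sqrt (∫ t in (0:ℝ)..1, (deriv (g n r) t) ^ 2) ≤ L)
    (hvV : ∀ r, ‖v r‖ ≤ V)
    (G : (Fin N → ℝ) → EuclideanSpace ℝ (Fin M))
    (hG : ∀ x, G x = ∑ r, (∏ n, g n r (x n)) • v r) :
    (∫ x in Set.univ.pi fun _ : Fin N => Set.Icc (0:ℝ) 1,
        ∑ i : Fin M, ∑ q : Fin N, (fderiv ℝ G x (Pi.single q 1) i) ^ 2) ≤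
      (R : ℝ) ^ 2 * V ^ 2 * N * L ^ 2 * c ^ (2 * (N - 1)) := by
  classical
  set cube : Set (Fin N → ℝ) := Set.univ.pi fun _ : Fin N => Set.Icc (0:ℝ) 1 with hcube
  set a : Fin N → Fin R → (Fin N → ℝ) → ℝ :=
    fun q r x => deriv (g q r) (x q) * ∏ n ∈ Finset.univ.erase q, g n r (x n) with ha
  have hgderiv : ∀ n r, Continuous (deriv (g n r)) := fun n r => (hg n r).continuous_deriv le_rfl
  have hgcont : ∀ n r, Continuous (g n r) := fun n r => (hg n r).continuous
  have hacont : ∀ q r, Continuous (a q r) := by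
    intro q r
    exact ((hgderiv q r).comp (continuous_apply q)).mul
      (continuous_finset_prod _ fun n _ => (hgcont n r).comp (continuous_apply n))
  have hcubemeas : MeasurableSet cube := MeasurableSet.univ_pi fun _ => measurableSet_Icc
  have hcubecompact : IsCompact cube := isCompact_univ_pi fun _ => isCompact_Icc
  -- fderiv computation
  have hfd : ∀ x (q : Fin N), fderiv ℝ G x (Pi.single q 1) = ∑ r, (a q r x) • v r := by
    intro x q
    have hG' : G = fun x => ∑ r, (∏ n, g n r (x n)) • v r := funext hG
    have hterm : ∀ r : Fin R, HasFDerivAt (fun x : Fin N → ℝ => (∏ n, g n r (x n)) • v r)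
        ((∑ n, (∏ j ∈ Finset.univ.erase n, g j r (x j)) •
          ((deriv (g n r) (x n)) • (ContinuousLinearMap.proj n :
            (Fin N → ℝ) →L[ℝ] ℝ))).smulRight (v r)) x := by
      intro r
      have hp : ∀ n ∈ Finset.univ, HasFDerivAt (fun x : Fin N → ℝ => g n r (x n))
          ((deriv (g n r) (x n)) • (ContinuousLinearMap.proj n : (Fin N → ℝ) →L[ℝ] ℝ)) x := by
        intro n _
        have h1 : HasDerivAt (g n r) (deriv (g n r) (x n)) (x n) :=
          ((hg n r).differentiable one_ne_zero).differentiableAt.hasDerivAt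
        have h2 := h1.hasFDerivAt.comp x
          ((ContinuousLinearMap.proj n : (Fin N → ℝ) →L[ℝ] ℝ)).hasFDerivAt
        refine h2.congr_fderiv ?_
        ext u
        simp [mul_comm]
      exact (HasFDerivAt.finset_prod hp).smul_const (v r)
    have hsum := HasFDerivAt.fun_sum (u := Finset.univ) fun r (_ : r ∈ Finset.univ) => hterm r
    rw [hG']
    rw [hsum.fderiv]
    simp only [ContinuousLinearMap.coe_sum', Finset.sum_apply,
      ContinuousLinearMap.smulRight_apply, ContinuousLinearMap.sum_apply,
      ContinuousLinearMap.smul_apply, ContinuousLinearMap.proj_apply]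
    refine Finset.sum_congr rfl fun r _ => ?_
    congr 1
    rw [Finset.sum_eq_single q]
    · simp [ha, mul_comm]
    · intro n _ hn
      simp [Pi.single_apply, hn]
    · simp
  -- pointwise bound
  have hpoint : ∀ x, (∑ i : Fin M, ∑ q : Fin N, (fderiv ℝ G x (Pi.single q 1) i) ^ 2)
      ≤ ∑ q : Fin N, ∑ r : Fin R, ((R:ℝ) * V^2) * (a q r x)^2 := by
    intro x
    rw [Finset.sum_comm]
    refine Finset.sum_le_sum fun q _ => ?_
    have h1 : ∑ i : Fin M, (fderiv ℝ G x (Pi.single q 1) i)^2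
        = ‖∑ r, (a q r x) • v r‖^2 := by
      rw [hfd]
      rw [EuclideanSpace.norm_eq, Real.sq_sqrt (by positivity)]
      refine Finset.sum_congr rfl fun i _ => ?_
      simp [Real.norm_eq_abs, sq_abs]
    rw [h1]
    have h2 : ‖∑ r, (a q r x) • v r‖ ≤ ∑ r, |a q r x| * V := by
      refine (norm_sum_le _ _).trans (Finset.sum_le_sum fun r _ => ?_)
      rw [norm_smul, Real.norm_eq_abs]
      exact mul_le_mul_of_nonneg_left (hvV r) (abs_nonneg _)
    calc ‖∑ r, a q r x • v r‖^2 ≤ (∑ r, |a q r x| * V)^2 :=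
          pow_le_pow_left₀ (norm_nonneg _) h2 2
      _ = V^2 * (∑ r, |a q r x|)^2 := by rw [← Finset.sum_mul]; ring
      _ ≤ V^2 * ((R:ℝ) * ∑ r, |a q r x|^2) := by
          refine mul_le_mul_of_nonneg_left ?_ (by positivity)
          have := sq_sum_le_card_mul_sum_sq (s := Finset.univ) (f := fun r : Fin R => |a q r x|)
          simpa using this
      _ = ∑ r, ((R:ℝ) * V^2) * (a q r x)^2 := by
          simp only [sq_abs, Finset.mul_sum]
          exact Finset.sum_congr rfl fun r _ => by ring
  -- one-dimensional integral bounds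
  have hb : ∀ (h : ℝ → ℝ) (b : ℝ), Real.sqrt (∫ t in (0:ℝ)..1, h t ^ 2) ≤ b →
      ∫ t in Set.Icc (0:ℝ) 1, h t ^ 2 ≤ b ^ 2 := by
    intro h b hh
    rw [integral_Icc_eq_integral_Ioc, ← intervalIntegral.integral_of_le zero_le_one]
    have h0 : 0 ≤ ∫ t in (0:ℝ)..1, h t ^ 2 :=
      intervalIntegral.integral_nonneg zero_le_one fun t _ => sq_nonneg _
    calc ∫ t in (0:ℝ)..1, h t ^ 2 = Real.sqrt (∫ t in (0:ℝ)..1, h t ^ 2) ^ 2 :=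
          (Real.sq_sqrt h0).symm
      _ ≤ b ^ 2 := pow_le_pow_left₀ (Real.sqrt_nonneg _) hh 2
  -- integral of a² over the cube
  have hIa : ∀ q r, ∫ x in cube, (a q r x)^2 ≤ L^2 * c^(2*(N-1)) := by
    intro q r
    set F : Fin N → ℝ → ℝ := fun n t => if n = q then (deriv (g q r) t)^2 else (g n r t)^2 with hF
    have hFnonneg : ∀ n t, 0 ≤ F n t := by
      intro n t
      by_cases h : n = q <;> simp [hF, h, sq_nonneg]
    have hstep : ∫ x in cube, (a q r x)^2 = ∏ n, ∫ t in Set.Icc (0:ℝ) 1, F n t := by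
      calc ∫ x in cube, (a q r x)^2 = ∫ x in cube, ∏ n, F n (x n) := by
            refine setIntegral_congr_fun hcubemeas fun x _ => ?_
            rw [← Finset.mul_prod_erase Finset.univ (fun n => F n (x n)) (Finset.mem_univ q)]
            have : ∀ n ∈ Finset.univ.erase q, F n (x n) = (g n r (x n))^2 := by
              intro n hn
              simp [hF, Finset.ne_of_mem_erase hn]
            rw [Finset.prod_congr rfl this]
            simp only [hF, if_pos rfl, ha]
            rw [mul_pow, ← Finset.prod_pow]
        _ = ∫ x : Fin N → ℝ, Set.indicator cube (fun x => ∏ n, F n (x n)) x :=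
            (integral_indicator hcubemeas).symm
        _ = ∫ x : Fin N → ℝ, ∏ n, Set.indicator (Set.Icc (0:ℝ) 1) (F n) (x n) := by
            congr 1
            funext x
            by_cases hx : x ∈ cube
            · rw [Set.indicator_of_mem hx]
              refine (Finset.prod_congr rfl fun n _ => ?_)
              rw [Set.indicator_of_mem (hx n (Set.mem_univ n))]
            · rw [Set.indicator_of_notMem hx]
              rw [hcube, Set.mem_pi] at hx
              push_neg at hx
              obtain ⟨n, _, hn⟩ := hx
              exact (Finset.prod_eq_zero (Finset.mem_univ n)
                (Set.indicator_of_notMem hn _)).symm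
        _ = ∏ n, ∫ t : ℝ, Set.indicator (Set.Icc (0:ℝ) 1) (F n) t :=
            MeasureTheory.integral_fintype_prod_eq_prod
              (fun n => Set.indicator (Set.Icc (0:ℝ) 1) (F n))
        _ = ∏ n, ∫ t in Set.Icc (0:ℝ) 1, F n t :=
            Finset.prod_congr rfl fun n _ => integral_indicator measurableSet_Icc
    rw [hstep]
    have hpos : ∀ n, 0 ≤ ∫ t in Set.Icc (0:ℝ) 1, F n t := fun n =>
      setIntegral_nonneg measurableSet_Icc fun t _ => hFnonneg n t
    rw [← Finset.mul_prod_erase Finset.univ (fun n => ∫ t in Set.Icc (0:ℝ) 1, F n t)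
      (Finset.mem_univ q)]
    have h1 : ∫ t in Set.Icc (0:ℝ) 1, F q t ≤ L^2 := by
      simp only [hF, if_pos rfl]
      exact hb _ L (hgL q r)
    have h2 : ∏ n ∈ Finset.univ.erase q, ∫ t in Set.Icc (0:ℝ) 1, F n t ≤ c^(2*(N-1)) := by
      calc ∏ n ∈ Finset.univ.erase q, ∫ t in Set.Icc (0:ℝ) 1, F n t
          ≤ ∏ _n ∈ Finset.univ.erase q, c^2 := by
            refine Finset.prod_le_prod (fun n _ => hpos n) fun n hn => ?_
            simp only [hF, Finset.ne_of_mem_erase hn, if_false]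
            exact hb _ c (hgc n r)
        _ = c^(2*(N-1)) := by
            rw [Finset.prod_const, Finset.card_erase_of_mem (Finset.mem_univ q)]
            rw [← pow_mul, Finset.card_univ, Fintype.card_fin]
    exact mul_le_mul h1 h2 (Finset.prod_nonneg fun n _ => hpos n) (by positivity)
  -- integrability of the bound
  have hint : ∀ q r, IntegrableOn (fun x => ((R:ℝ) * V^2) * (a q r x)^2) cube volume := by
    intro q r
    exact (continuous_const.mul ((hacont q r).pow 2)).continuousOn.integrableOn_compact
      hcubecompact
  have hBint : IntegrableOn (fun x => ∑ q : Fin N, ∑ r : Fin R, ((R:ℝ) * V^2) * (a q r x)^2)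
      cube volume := by
    apply integrable_finset_sum
    intro q _
    apply integrable_finset_sum
    intro r _
    exact hint q r
  calc (∫ x in cube, ∑ i : Fin M, ∑ q : Fin N, (fderiv ℝ G x (Pi.single q 1) i) ^ 2)
      ≤ ∫ x in cube, ∑ q : Fin N, ∑ r : Fin R, ((R:ℝ) * V^2) * (a q r x)^2 := by
        refine integral_mono_of_nonneg ?_ hBint ?_
        · exact Filter.Eventually.of_forall fun x => by positivity
        · exact Filter.Eventually.of_forall hpoint
    _ = ∑ q : Fin N, ∑ r : Fin R, ((R:ℝ) * V^2) * ∫ x in cube, (a q r x)^2 := by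
        rw [integral_finset_sum _ fun q _ => integrable_finset_sum _ fun r _ => hint q r]
        refine Finset.sum_congr rfl fun q _ => ?_
        rw [integral_finset_sum _ fun r _ => hint q r]
        exact Finset.sum_congr rfl fun r _ => integral_const_mul _ _
    _ ≤ ∑ _q : Fin N, ∑ _r : Fin R, ((R:ℝ) * V^2) * (L^2 * c^(2*(N-1))) := by
        refine Finset.sum_le_sum fun q _ => Finset.sum_le_sum fun r _ => ?_
        exact mul_le_mul_of_nonneg_left (hIa q r) (by positivity)
    _ = (R : ℝ) ^ 2 * V ^ 2 * N * L ^ 2 * c ^ (2 * (N - 1)) := by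
        simp [Finset.sum_const, Finset.card_univ]
        ring
end

section
/- Let g : [0,1]^N → ℝ^M be a low-rank tensor-product model g(x) = Σ_{r=1}^R v_r ∏_{n=1}^N g_{n,r}(x_n), where each g_{n,r} : [0,1] → ℝ is continuously differentiable, and let B = ∏_{n=1}^N [a_n, b_n] ⊆ [0,1]^N be an axis-aligned box. Then the local Dirichlet energy over B admits the closed form ∫_B ‖∇g(x)‖_F² dx = Σ_{r=1}^R Σ_{k=1}^R ⟨v_r, v_k⟩_{ℝ^M} Σ_{q=1}^N ⟨g'_{q,r}, g'_{q,k}⟩_{[a_q,b_q]} ∏_{n≠q} ⟨g_{n,r}, g_{n,k}⟩_{[a_n,b_n]}, where ⟨f, h⟩_{[a,b]} := ∫_a^b f(x) h(x) dx. -/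
open MeasureTheory

/-- The univariate factor functions appearing in the Dirichlet-energy expansion. -/
noncomputable def tpF {N R : ℕ} (g : Fin N → Fin R → ℝ → ℝ) (r k : Fin R) (q n : Fin N) : ℝ → ℝ :=
  fun t => if n = q then deriv (g n r) t * deriv (g n k) t else g n r t * g n k t

lemma euclid_sum_apply {M R : ℕ} (w : Fin R → EuclideanSpace ℝ (Fin M))
    (s : Finset (Fin R)) (i : Fin M) : (∑ r ∈ s, w r) i = ∑ r ∈ s, w r i :=
  by rw [WithLp.ofLp_sum, Finset.sum_apply]

lemma tp_fderiv {N M R : ℕ} (v : Fin R → EuclideanSpace ℝ (Fin M))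
    (g : Fin N → Fin R → ℝ → ℝ) (hg : ∀ n r, ContDiff ℝ 1 (g n r))
    (x : Fin N → ℝ) (q : Fin N) (i : Fin M) :
    fderiv ℝ (fun y => ∑ r, (∏ n, g n r (y n)) • v r) x (Pi.single q 1) i
      = ∑ r, ((∏ n ∈ Finset.univ.erase q, g n r (x n)) * deriv (g q r) (x q)) * v r i := by
  classical
  have hor : ∀ n r, HasFDerivAt (fun y : Fin N → ℝ => g n r (y n))
      ((deriv (g n r) (x n)) • (ContinuousLinearMap.proj n : (Fin N → ℝ) →L[ℝ] ℝ)) x := by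
    intro n r
    have hproj : HasFDerivAt (fun y : Fin N → ℝ => y n)
        (ContinuousLinearMap.proj n : (Fin N → ℝ) →L[ℝ] ℝ) x :=
      (ContinuousLinearMap.proj n : (Fin N → ℝ) →L[ℝ] ℝ).hasFDerivAt
    exact (((hg n r).differentiable one_ne_zero (x n)).hasDerivAt).comp_hasFDerivAt x hproj
  have hφ : ∀ r, HasFDerivAt (fun y : Fin N → ℝ => ∏ n, g n r (y n))
      (∑ n, (∏ j ∈ Finset.univ.erase n, g j r (x j)) •
        ((deriv (g n r) (x n)) • (ContinuousLinearMap.proj n : (Fin N → ℝ) →L[ℝ] ℝ))) x :=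
    fun r => HasFDerivAt.finset_prod (fun n _ => hor n r)
  have hG' : HasFDerivAt (fun y : Fin N → ℝ => ∑ r, (∏ n, g n r (y n)) • v r)
      (∑ r, ContinuousLinearMap.smulRight
        (∑ n, (∏ j ∈ Finset.univ.erase n, g j r (x j)) •
          ((deriv (g n r) (x n)) • (ContinuousLinearMap.proj n : (Fin N → ℝ) →L[ℝ] ℝ)))
        (v r)) x :=
    HasFDerivAt.fun_sum (fun r _ => (hφ r).smul_const (v r))
  rw [hG'.fderiv]
  rw [ContinuousLinearMap.sum_apply, euclid_sum_apply]
  refine Finset.sum_congr rfl fun r _ => ?_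
  rw [ContinuousLinearMap.smulRight_apply, PiLp.smul_apply, smul_eq_mul]
  congr 1
  rw [ContinuousLinearMap.sum_apply]
  simp only [ContinuousLinearMap.smul_apply, ContinuousLinearMap.proj_apply,
    Pi.single_apply, smul_eq_mul, mul_ite, mul_one, mul_zero, ite_mul, zero_mul]
  rw [Finset.sum_ite_eq' Finset.univ q]
  simp

/-- Local Dirichlet energy of a low-rank tensor-product model over an axis-aligned box
`B = ∏_n [a_n, b_n] ⊆ [0,1]^N` admits the closed form
`Σ_r Σ_k ⟨v_r, v_k⟩ Σ_q ⟨g'_{q,r}, g'_{q,k}⟩_{[a_q,b_q]} ∏_{n≠q} ⟨g_{n,r}, g_{n,k}⟩_{[a_n,b_n]}`. -/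
theorem tpbs_local_dirichlet_energy_box (N M R : ℕ)
    (v : Fin R → EuclideanSpace ℝ (Fin M))
    (g : Fin N → Fin R → ℝ → ℝ)
    (hg : ∀ n r, ContDiff ℝ 1 (g n r))
    (G : (Fin N → ℝ) → EuclideanSpace ℝ (Fin M))
    (hG : ∀ x, G x = ∑ r, (∏ n, g n r (x n)) • v r)
    (a b : Fin N → ℝ)
    (hab : ∀ n, 0 ≤ a n ∧ a n ≤ b n ∧ b n ≤ 1) :
    (∫ x in Set.univ.pi fun n : Fin N => Set.Icc (a n) (b n),
        ∑ i : Fin M, ∑ q : Fin N, (fderiv ℝ G x (Pi.single q 1) i) ^ 2) =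
      ∑ r, ∑ k, (inner ℝ (v r) (v k) : ℝ) *
        ∑ q, (∫ t in (a q)..(b q), deriv (g q r) t * deriv (g q k) t) *
          ∏ n ∈ Finset.univ.erase q, ∫ t in (a n)..(b n), g n r t * g n k t := by
  classical
  obtain rfl : G = fun y => ∑ r, (∏ n, g n r (y n)) • v r := funext hG
  set S : Set (Fin N → ℝ) := Set.univ.pi fun n : Fin N => Set.Icc (a n) (b n) with hS
  have measS : MeasurableSet S := MeasurableSet.univ_pi fun n => measurableSet_Icc
  have compS : IsCompact S := isCompact_univ_pi fun n => isCompact_Icc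
  have hinner : ∀ r k : Fin R, (inner ℝ (v r) (v k) : ℝ) = ∑ i, v r i * v k i := by
    intro r k
    rw [PiLp.inner_apply]; simp [RCLike.inner_apply]
    exact Finset.sum_congr rfl fun i _ => mul_comm _ _
  -- pointwise identity for the integrand
  have key : ∀ c : Fin R → ℝ,
      ∑ i : Fin M, (∑ r, c r * v r i) ^ 2
        = ∑ r, ∑ k, (inner ℝ (v r) (v k) : ℝ) * (c r * c k) := by
    intro c
    simp_rw [hinner, pow_two, Finset.sum_mul_sum, Finset.sum_mul]
    rw [Finset.sum_comm]
    refine Finset.sum_congr rfl fun r _ => ?_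
    rw [Finset.sum_comm]
    exact Finset.sum_congr rfl fun k _ => Finset.sum_congr rfl fun i _ => by ring
  have hprod : ∀ (x : Fin N → ℝ) (r k : Fin R) (q : Fin N),
      ((∏ n ∈ Finset.univ.erase q, g n r (x n)) * deriv (g q r) (x q)) *
        ((∏ n ∈ Finset.univ.erase q, g n k (x n)) * deriv (g q k) (x q))
        = ∏ n, tpF g r k q n (x n) := by
    intro x r k q
    rw [← Finset.mul_prod_erase Finset.univ (fun n => tpF g r k q n (x n)) (Finset.mem_univ q)]
    have h1 : tpF g r k q q (x q) = deriv (g q r) (x q) * deriv (g q k) (x q) := by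
      simp [tpF]
    have h2 : ∏ n ∈ Finset.univ.erase q, tpF g r k q n (x n)
        = ∏ n ∈ Finset.univ.erase q, g n r (x n) * g n k (x n) := by
      refine Finset.prod_congr rfl fun n hn => ?_
      simp [tpF, Finset.ne_of_mem_erase hn]
    rw [h1, h2, Finset.prod_mul_distrib]
    ring
  have hpt : ∀ x : Fin N → ℝ,
      (∑ i : Fin M, ∑ q : Fin N,
          (fderiv ℝ (fun y => ∑ r, (∏ n, g n r (y n)) • v r) x (Pi.single q 1) i) ^ 2)
        = ∑ r, ∑ k, ∑ q : Fin N,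
            (inner ℝ (v r) (v k) : ℝ) * ∏ n, tpF g r k q n (x n) := by
    intro x
    rw [Finset.sum_comm]
    have : ∀ q : Fin N, ∑ i : Fin M,
        (fderiv ℝ (fun y => ∑ r, (∏ n, g n r (y n)) • v r) x (Pi.single q 1) i) ^ 2
        = ∑ r, ∑ k, (inner ℝ (v r) (v k) : ℝ) * ∏ n, tpF g r k q n (x n) := by
      intro q
      simp_rw [tp_fderiv v g hg x q]
      rw [key fun r => (∏ n ∈ Finset.univ.erase q, g n r (x n)) * deriv (g q r) (x q)]
      exact Finset.sum_congr rfl fun r _ => Finset.sum_congr rfl fun k _ => by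
        rw [hprod x r k q]
    simp_rw [this]
    rw [Finset.sum_comm]
    exact Finset.sum_congr rfl fun r _ => by rw [Finset.sum_comm]
  -- continuity and integrability
  have contF : ∀ (r k : Fin R) (q n : Fin N), Continuous (tpF g r k q n) := by
    intro r k q n
    unfold tpF
    split
    · exact ((hg n r).continuous_deriv le_rfl).mul ((hg n k).continuous_deriv le_rfl)
    · exact ((hg n r).continuous).mul ((hg n k).continuous)
  have contTerm : ∀ (r k : Fin R) (q : Fin N),
      Continuous fun x : Fin N → ℝ => ∏ n, tpF g r k q n (x n) :=
    fun r k q => continuous_finset_prod _ fun n _ => (contF r k q n).comp (continuous_apply n)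
  have hint : ∀ (r k : Fin R) (q : Fin N),
      Integrable (fun x => (inner ℝ (v r) (v k) : ℝ) * ∏ n, tpF g r k q n (x n))
        (volume.restrict S) :=
    fun r k q => (((contTerm r k q).continuousOn).integrableOn_compact compS).const_mul _
  -- factorization of the box integral
  have fact : ∀ (r k : Fin R) (q : Fin N),
      ∫ x in S, ∏ n, tpF g r k q n (x n)
        = ∏ n, ∫ t in Set.Icc (a n) (b n), tpF g r k q n t := by
    intro r k q
    rw [← integral_indicator measS]
    have hind : (S.indicator fun x => ∏ n, tpF g r k q n (x n))
        = fun x => ∏ n, (Set.Icc (a n) (b n)).indicator (tpF g r k q n) (x n) := by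
      funext x
      by_cases hx : x ∈ S
      · rw [Set.indicator_of_mem hx]
        exact Finset.prod_congr rfl fun n _ =>
          (Set.indicator_of_mem (hx n (Set.mem_univ n)) _).symm
      · rw [Set.indicator_of_notMem hx]
        rw [hS, Set.mem_univ_pi] at hx
        push_neg at hx
        obtain ⟨n, hn⟩ := hx
        exact (Finset.prod_eq_zero (Finset.mem_univ n)
          (Set.indicator_of_notMem hn _)).symm
    rw [hind,
      MeasureTheory.integral_fintype_prod_volume_eq_prod (ι := Fin N)
        (f := fun n => (Set.Icc (a n) (b n)).indicator (tpF g r k q n))]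
    exact Finset.prod_congr rfl fun n _ => integral_indicator measurableSet_Icc
  -- Icc integrals to interval integrals
  have icc : ∀ (n : Fin N) (f : ℝ → ℝ),
      ∫ t in Set.Icc (a n) (b n), f t = ∫ t in (a n)..(b n), f t := by
    intro n f
    rw [MeasureTheory.integral_Icc_eq_integral_Ioc,
      ← intervalIntegral.integral_of_le (hab n).2.1]
  -- main computation
  simp_rw [hpt]
  rw [integral_finset_sum _ fun r _ => integrable_finset_sum _ fun k _ =>
    integrable_finset_sum _ fun q _ => hint r k q]
  refine Finset.sum_congr rfl fun r _ => ?_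
  rw [integral_finset_sum _ fun k _ => integrable_finset_sum _ fun q _ => hint r k q]
  refine Finset.sum_congr rfl fun k _ => ?_
  rw [integral_finset_sum _ fun q _ => hint r k q, Finset.mul_sum]
  refine Finset.sum_congr rfl fun q _ => ?_
  rw [MeasureTheory.integral_const_mul, fact r k q]
  congr 1
  rw [← Finset.mul_prod_erase Finset.univ
    (fun n => ∫ t in Set.Icc (a n) (b n), tpF g r k q n t) (Finset.mem_univ q)]
  congr 1
  · rw [icc q]
    refine intervalIntegral.integral_congr fun t _ => ?_
    simp [tpF]
  · refine Finset.prod_congr rfl fun n hn => ?_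
    rw [icc n]
    refine intervalIntegral.integral_congr fun t _ => ?_
    simp [tpF, Finset.ne_of_mem_erase hn]
end

section
/- Let g : [0,1]^N → ℝ^M be a low-rank tensor-product model g(x) = Σ_{r=1}^R v_r ∏_{n=1}^N g_{n,r}(x_n) with each g_{n,r} continuous, and let p(x) = Σ_{s=1}^S w_s ∏_{n=1}^N p_{n,s}(x_n) be a low-rank tensor-product density model with each p_{n,s} continuous. Fix 1 ≤ D < N and observed coordinates x_{D+1}, …, x_N ∈ [0,1], and assume the marginal Σ_{s=1}^S w_s ∏_{n=D+1}^N p_{n,s}(x_n) > 0. Then the conditional expectation of g given the observed coordinates admits the closed form: (∫_{[0,1]^D} g(u, x_{D+1},…,x_N) p(u, x_{D+1},…,x_N) du) / (∫_{[0,1]^D} p(u, x_{D+1},…,x_N) du) = (Σ_{r=1}^R Σ_{s=1}^S v_r w_s (∏_{n=D+1}^N g_{n,r}(x_n) p_{n,s}(x_n)) ∏_{d=1}^D ⟨g_{d,r}, p_{d,s}⟩) / (Σ_{t=1}^S w_t ∏_{n=D+1}^N p_{n,t}(x_n)), where ⟨f, h⟩ := ∫_0^1 f(t) h(t) dt. 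-/
open MeasureTheory

lemma box_integral_prod {D : ℕ} (f : Fin D → ℝ → ℝ) :
    (∫ u in Set.univ.pi fun _ : Fin D => Set.Icc (0:ℝ) 1, ∏ d, f d (u d))
      = ∏ d, ∫ t in (0:ℝ)..1, f d t := by
  rw [← integral_indicator (MeasurableSet.univ_pi fun _ => measurableSet_Icc)]
  have h : ∀ u : Fin D → ℝ,
      (Set.univ.pi fun _ : Fin D => Set.Icc (0:ℝ) 1).indicator
        (fun u => ∏ d, f d (u d)) u
        = ∏ d, (Set.Icc (0:ℝ) 1).indicator (f d) (u d) := by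
    intro u
    by_cases hu : u ∈ Set.univ.pi fun _ : Fin D => Set.Icc (0:ℝ) 1
    · rw [Set.indicator_of_mem hu]
      exact Finset.prod_congr rfl fun d _ =>
        (Set.indicator_of_mem (hu d (Set.mem_univ d)) _).symm
    · rw [Set.indicator_of_notMem hu]
      rw [Set.mem_univ_pi] at hu
      push_neg at hu
      obtain ⟨d, hd⟩ := hu
      exact (Finset.prod_eq_zero (Finset.mem_univ d)
        (Set.indicator_of_notMem hd _)).symm
  simp_rw [h]
  rw [MeasureTheory.integral_fintype_prod_volume_eq_prod (ι := Fin D)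
    (fun d => (Set.Icc (0:ℝ) 1).indicator (f d))]
  refine Finset.prod_congr rfl fun d _ => ?_
  rw [integral_indicator measurableSet_Icc, intervalIntegral.integral_of_le zero_le_one,
    ← integral_Icc_eq_integral_Ioc]

/-- Closed form of the conditional-expectation estimator for inference from incomplete
observations: for a low-rank tensor-product model `g` and a low-rank tensor-product density
`p`, with the first `D` coordinates unobserved and the marginal of the observed coordinates
positive, the conditional expectation of `g` given the observed coordinates equals
`(Σ_r Σ_s v_r w_s (∏_{n>D} g_{n,r}(x_n) p_{n,s}(x_n)) ∏_{d≤D} ⟨g_{d,r}, p_{d,s}⟩) /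
 (Σ_t w_t ∏_{n>D} p_{n,t}(x_n))`. -/
theorem tpbs_conditional_expectation_closed_form (N M R S D : ℕ)
    (hD1 : 1 ≤ D) (hDN : D < N)
    (v : Fin R → EuclideanSpace ℝ (Fin M))
    (g : Fin N → Fin R → ℝ → ℝ) (hg : ∀ n r, Continuous (g n r))
    (w : Fin S → ℝ) (hw0 : ∀ s, 0 ≤ w s) (hw1 : ∑ s, w s = 1)
    (p : Fin N → Fin S → ℝ → ℝ) (hpc : ∀ n s, Continuous (p n s))
    (hp0 : ∀ n s, ∀ t ∈ Set.Icc (0:ℝ) 1, 0 ≤ p n s t)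
    (hp1 : ∀ n s, ∫ t in (0:ℝ)..1, p n s t = 1)
    (G : (Fin N → ℝ) → EuclideanSpace ℝ (Fin M))
    (hG : ∀ x, G x = ∑ r, (∏ n, g n r (x n)) • v r)
    (P : (Fin N → ℝ) → ℝ)
    (hP : ∀ x, P x = ∑ s, w s * ∏ n, p n s (x n))
    (x : Fin N → ℝ) (hx : ∀ n : Fin N, D ≤ (n : ℕ) → x n ∈ Set.Icc (0:ℝ) 1)
    (hpos : 0 < ∑ s, w s *
        ∏ n ∈ Finset.univ.filter fun n : Fin N => D ≤ (n : ℕ), p n s (x n)) :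
    (∫ u in Set.univ.pi fun _ : Fin D => Set.Icc (0:ℝ) 1,
          P (fun n : Fin N => if h : (n : ℕ) < D then u ⟨n, h⟩ else x n) ∂volume)⁻¹ •
        (∫ u in Set.univ.pi fun _ : Fin D => Set.Icc (0:ℝ) 1,
          P (fun n : Fin N => if h : (n : ℕ) < D then u ⟨n, h⟩ else x n) •
            G fun n : Fin N => if h : (n : ℕ) < D then u ⟨n, h⟩ else x n) =
      (∑ t, w t *
          ∏ n ∈ Finset.univ.filter fun n : Fin N => D ≤ (n : ℕ), p n t (x n))⁻¹ •
        ∑ r, ∑ s, (w s *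
          (∏ n ∈ Finset.univ.filter fun n : Fin N => D ≤ (n : ℕ),
            g n r (x n) * p n s (x n)) *
          ∏ d ∈ Finset.univ.filter fun n : Fin N => (n : ℕ) < D,
            ∫ t in (0:ℝ)..1, g d r t * p d s t) • v r := by
  classical
  have hboxm : MeasurableSet (Set.univ.pi fun _ : Fin D => Set.Icc (0:ℝ) 1) :=
    MeasurableSet.univ_pi fun _ => measurableSet_Icc
  have hboxc : IsCompact (Set.univ.pi fun _ : Fin D => Set.Icc (0:ℝ) 1) :=
    isCompact_univ_pi fun _ => isCompact_Icc
  -- reindexing of the unobserved coordinates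
  have hmap : (Finset.univ.filter fun n : Fin N => (n : ℕ) < D)
      = Finset.map (Fin.castLEEmb hDN.le) Finset.univ := by
    ext n
    simp only [Finset.mem_filter, Finset.mem_univ, true_and, Finset.mem_map,
      Fin.castLEEmb_apply]
    constructor
    · intro h; exact ⟨⟨n, h⟩, Fin.ext rfl⟩
    · rintro ⟨d, rfl⟩; exact d.2
  -- splitting products over all coordinates
  have hsplit : ∀ (F : Fin N → ℝ → ℝ) (u : Fin D → ℝ),
      (∏ n, F n (if h : (n : ℕ) < D then u ⟨n, h⟩ else x n))
        = (∏ d : Fin D, F (Fin.castLE hDN.le d) (u d))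
          * ∏ n ∈ Finset.univ.filter fun n : Fin N => D ≤ (n : ℕ), F n (x n) := by
    intro F u
    rw [← Finset.prod_filter_mul_prod_filter_not Finset.univ
      (fun n : Fin N => (n : ℕ) < D)]
    congr 1
    · rw [hmap, Finset.prod_map]
      refine Finset.prod_congr rfl fun d _ => ?_
      rw [Fin.castLEEmb_apply]
      simp only [Fin.coe_castLE]
      rw [dif_pos d.isLt]
    · refine Finset.prod_congr (by ext n; simp [not_lt]) fun n hn => ?_
      rw [Finset.mem_filter] at hn
      rw [dif_neg (not_lt.mpr hn.2)]
  -- pointwise forms of P and G along the section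
  have hPX : ∀ u : Fin D → ℝ,
      P (fun n : Fin N => if h : (n : ℕ) < D then u ⟨n, h⟩ else x n)
        = ∑ s, (w s * ∏ n ∈ Finset.univ.filter fun n : Fin N => D ≤ (n : ℕ),
              p n s (x n))
            * ∏ d : Fin D, p (Fin.castLE hDN.le d) s (u d) := by
    intro u
    rw [hP]
    refine Finset.sum_congr rfl fun s _ => ?_
    rw [hsplit (fun n => p n s) u]; ring
  have hGX : ∀ u : Fin D → ℝ,
      G (fun n : Fin N => if h : (n : ℕ) < D then u ⟨n, h⟩ else x n)
        = ∑ r, ((∏ n ∈ Finset.univ.filter fun n : Fin N => D ≤ (n : ℕ),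
              g n r (x n))
            * ∏ d : Fin D, g (Fin.castLE hDN.le d) r (u d)) • v r := by
    intro u
    rw [hG]
    refine Finset.sum_congr rfl fun r _ => ?_
    rw [hsplit (fun n => g n r) u]; ring_nf
  -- the numerator integrand
  have hnum : ∀ u : Fin D → ℝ,
      P (fun n : Fin N => if h : (n : ℕ) < D then u ⟨n, h⟩ else x n) •
          G (fun n : Fin N => if h : (n : ℕ) < D then u ⟨n, h⟩ else x n)
        = ∑ r, ∑ s,
            ((w s * ∏ n ∈ Finset.univ.filter fun n : Fin N => D ≤ (n : ℕ),
                g n r (x n) * p n s (x n))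
              * ∏ d : Fin D,
                  g (Fin.castLE hDN.le d) r (u d) * p (Fin.castLE hDN.le d) s (u d))
              • v r := by
    intro u
    rw [hPX u, hGX u, Finset.sum_smul]
    rw [Finset.sum_comm]
    refine Finset.sum_congr rfl fun r _ => ?_
    rw [Finset.smul_sum]
    refine Finset.sum_congr rfl fun s _ => ?_
    rw [smul_smul]
    congr 1
    rw [Finset.prod_mul_distrib, Finset.prod_mul_distrib]
    ring
  -- continuity helper
  have hqc : ∀ (F : Fin D → ℝ → ℝ), (∀ d, Continuous (F d)) →
      Continuous fun u : Fin D → ℝ => ∏ d, F d (u d) :=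
    fun F hF => continuous_finset_prod _ fun d _ => (hF d).comp (continuous_apply d)
  -- the denominator
  have hden : (∫ u in Set.univ.pi fun _ : Fin D => Set.Icc (0:ℝ) 1,
        P (fun n : Fin N => if h : (n : ℕ) < D then u ⟨n, h⟩ else x n) ∂volume)
      = ∑ s, w s * ∏ n ∈ Finset.univ.filter fun n : Fin N => D ≤ (n : ℕ),
          p n s (x n) := by
    simp only [hPX]
    rw [integral_finset_sum]
    · refine Finset.sum_congr rfl fun s _ => ?_
      rw [integral_const_mul _ _,
        box_integral_prod (fun d t => p (Fin.castLE hDN.le d) s t),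
        Finset.prod_eq_one fun d _ => hp1 (Fin.castLE hDN.le d) s, mul_one]
    · intro s _
      exact (continuous_const.mul (hqc _ fun d =>
        hpc (Fin.castLE hDN.le d) s)).continuousOn.integrableOn_compact hboxc
  -- the numerator
  have hint : ∀ (r : Fin R) (s : Fin S),
      IntegrableOn (fun u : Fin D → ℝ =>
        (w s * ∏ n ∈ Finset.univ.filter fun n : Fin N => D ≤ (n : ℕ),
            g n r (x n) * p n s (x n))
          * ∏ d : Fin D,
              g (Fin.castLE hDN.le d) r (u d) * p (Fin.castLE hDN.le d) s (u d))
        (Set.univ.pi fun _ : Fin D => Set.Icc (0:ℝ) 1) volume :=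
    fun r s => (continuous_const.mul (hqc _ fun d =>
      (hg (Fin.castLE hDN.le d) r).mul
        (hpc (Fin.castLE hDN.le d) s))).continuousOn.integrableOn_compact hboxc
  have hnumI : (∫ u in Set.univ.pi fun _ : Fin D => Set.Icc (0:ℝ) 1,
        P (fun n : Fin N => if h : (n : ℕ) < D then u ⟨n, h⟩ else x n) •
          G fun n : Fin N => if h : (n : ℕ) < D then u ⟨n, h⟩ else x n)
      = ∑ r, ∑ s,
          ((w s * ∏ n ∈ Finset.univ.filter fun n : Fin N => D ≤ (n : ℕ),
              g n r (x n) * p n s (x n))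
            * ∏ d : Fin D, ∫ t in (0:ℝ)..1,
                g (Fin.castLE hDN.le d) r t * p (Fin.castLE hDN.le d) s t) • v r := by
    simp only [hnum]
    rw [integral_finset_sum _ fun r _ =>
      integrable_finset_sum _ fun s _ => (hint r s).smul_const (v r)]
    refine Finset.sum_congr rfl fun r _ => ?_
    rw [integral_finset_sum _ fun s _ => (hint r s).smul_const (v r)]
    refine Finset.sum_congr rfl fun s _ => ?_
    rw [integral_smul_const, integral_const_mul _ _,
      box_integral_prod (fun d t =>
        g (Fin.castLE hDN.le d) r t * p (Fin.castLE hDN.le d) s t)]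
  rw [hden, hnumI, hmap]
  simp only [Finset.prod_map, Fin.castLEEmb_apply]
end
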